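/- arXiv:1312.0377 — 2 statements merged into one kernel-verified Lean document; each statement's English description precedes it below -/
import Mathlib

section
/- Let p ≥ 3 and ℓ ≥ 2 be integers with pℓ ≥ 6, and let f(x) = x³ - ℓx + pℓ/(pℓ+1)⁴ ∈ ℝ[x]. Then every complex root w of f satisfies min(|w|, |w - √ℓ|, |w + √ℓ|) < 1/(pℓ+1), each of the three open discs of radius 1/(pℓ+1) centered at 0, √ℓ, -√ℓ contains exactly one root of f, and all three roots of f are real. -/
set_option maxHeartbeats 1000000
open Polynomial in
theorem stmt7 (p ℓ : ℕ) (hp : 3 ≤ p) (hl : 2 ≤ ℓ) (hpl : 6 ≤ p * ℓ)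
    (f : ℝ[X])
    (hf : f = X ^ 3 - C (ℓ : ℝ) * X + C ((p * ℓ : ℝ) / (p * ℓ + 1) ^ 4)) :
    (∀ w : ℂ, Polynomial.aeval w f = 0 →
      min (min ‖w‖ ‖w - ((Real.sqrt ℓ : ℝ) : ℂ)‖)
          ‖w + ((Real.sqrt ℓ : ℝ) : ℂ)‖
        < 1 / (p * ℓ + 1)) ∧
    (∀ c ∈ ({0, ((Real.sqrt ℓ : ℝ) : ℂ), -((Real.sqrt ℓ : ℝ) : ℂ)} : Set ℂ),
      ∃! w : ℂ, Polynomial.aeval w f = 0 ∧ ‖w - c‖ < 1 / (p * ℓ + 1)) ∧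
    (∀ w : ℂ, Polynomial.aeval w f = 0 → w.im = 0) := by
  set ε : ℝ := (p * ℓ : ℝ) / (p * ℓ + 1) ^ 4 with hεdef
  set r : ℝ := 1 / ((p:ℝ) * ℓ + 1) with hrdef
  set s : ℝ := Real.sqrt ℓ with hsdef
  -- basic numeric facts
  have hl2 : (2:ℝ) ≤ (ℓ:ℝ) := by exact_mod_cast hl
  have hN : (7:ℝ) ≤ (p:ℝ) * ℓ + 1 := by
    have h6 : (6:ℝ) ≤ (p:ℝ) * ℓ := by exact_mod_cast hpl
    linarith
  have hN0 : (0:ℝ) < (p:ℝ) * ℓ + 1 := by linarith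
  have hr0 : 0 < r := by rw [hrdef]; positivity
  have hr7 : r ≤ 1/7 := by
    rw [hrdef]; exact one_div_le_one_div_of_le (by norm_num) hN
  have hε0 : 0 < ε := by
    rw [hεdef]
    exact div_pos (by linarith) (by positivity)
  have hεr : ε < r^3 := by
    rw [hεdef, hrdef, div_pow, one_pow, div_lt_div_iff₀ (by positivity) (by positivity)]
    nlinarith [pow_pos hN0 3]
  have hs2 : s^2 = (ℓ:ℝ) := Real.sq_sqrt (by positivity)
  have hs0 : 0 ≤ s := Real.sqrt_nonneg _
  have hs1 : 1 ≤ s := by nlinarith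
  have hr2 : r^2 ≤ 1/49 := by nlinarith
  clear_value ε r s
  -- real roots by IVT
  have hcont : Continuous fun x : ℝ => x^3 - (ℓ:ℝ)*x + ε := by fun_prop
  have e1 : 0 ≤ s^2*r := mul_nonneg (sq_nonneg s) hr0.le
  have e2 : 0 ≤ s*r^2 := mul_nonneg hs0 (sq_nonneg r)
  have e3 : 0 ≤ s*r*(2*s-3*r) := mul_nonneg (mul_nonneg hs0 hr0.le) (by linarith)
  have h3r : r^3 ≤ r/49 := by nlinarith [mul_le_mul_of_nonneg_left hr2 hr0.le]
  have h2r : 2*r ≤ (ℓ:ℝ)*r := by nlinarith [mul_le_mul_of_nonneg_right hl2 hr0.le]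
  have hr3pos : 0 < r^3 := pow_pos hr0 3
  have sgn1 : (-s-r)^3 - (ℓ:ℝ)*(-s-r) + ε < 0 := by
    rw [← hs2]; linarith [e1, e2, hεr]
  have sgn2 : (-s+r)^3 - (ℓ:ℝ)*(-s+r) + ε > 0 := by
    rw [← hs2]; linarith [e3, hε0, hr3pos]
  have sgn3 : (-r)^3 - (ℓ:ℝ)*(-r) + ε > 0 := by
    linarith [h3r, h2r, hε0, hr0]
  have sgn4 : (r)^3 - (ℓ:ℝ)*(r) + ε < 0 := by
    linarith [h3r, h2r, hεr, hr0]
  have sgn5 : (s-r)^3 - (ℓ:ℝ)*(s-r) + ε < 0 := by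
    rw [← hs2]; linarith [e3, hεr, hr3pos]
  have sgn6 : (s+r)^3 - (ℓ:ℝ)*(s+r) + ε > 0 := by
    rw [← hs2]; linarith [e1, e2, hε0, hr3pos]
  obtain ⟨a, haI, ha0⟩ := intermediate_value_Ioo (show -s-r ≤ -s+r by linarith)
    hcont.continuousOn (Set.mem_Ioo.mpr ⟨sgn1, sgn2⟩)
  obtain ⟨b, hbI, hb0⟩ := intermediate_value_Ioo' (show -r ≤ r by linarith)
    hcont.continuousOn (Set.mem_Ioo.mpr ⟨sgn4, sgn3⟩)
  obtain ⟨c, hcI, hc0⟩ := intermediate_value_Ioo (show s-r ≤ s+r by linarith)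
    hcont.continuousOn (Set.mem_Ioo.mpr ⟨sgn5, sgn6⟩)
  simp only [Set.mem_Ioo] at haI hbI hcI
  obtain ⟨ha1, ha2⟩ := haI
  obtain ⟨hb1, hb2⟩ := hbI
  obtain ⟨hc1, hc2⟩ := hcI
  simp only at ha0 hb0 hc0
  clear hcont sgn1 sgn2 sgn3 sgn4 sgn5 sgn6 e1 e2 e3
  -- ordering and distinctness
  have horder1 : a < b := by linarith
  have horder2 : b < c := by linarith
  have hne_ab : a ≠ b := ne_of_lt horder1
  have hne_bc : b ≠ c := ne_of_lt horder2
  have hne_ac : a ≠ c := ne_of_lt (lt_trans horder1 horder2)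
  -- symmetric functions
  have hab2 : a^2 + a*b + b^2 = (ℓ:ℝ) := by
    have h : (a - b) * (a^2 + a*b + b^2 - (ℓ:ℝ)) = 0 := by linear_combination ha0 - hb0
    rcases mul_eq_zero.mp h with h' | h'
    · exact absurd (sub_eq_zero.mp h') hne_ab
    · linarith [sub_eq_zero.mp h']
  have hbc2 : b^2 + b*c + c^2 = (ℓ:ℝ) := by
    have h : (b - c) * (b^2 + b*c + c^2 - (ℓ:ℝ)) = 0 := by linear_combination hb0 - hc0
    rcases mul_eq_zero.mp h with h' | h'
    · exact absurd (sub_eq_zero.mp h') hne_bc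
    · linarith [sub_eq_zero.mp h']
  have hsum : a + b + c = 0 := by
    have h : (a - c) * (a + b + c) = 0 := by linear_combination hab2 - hbc2
    rcases mul_eq_zero.mp h with h' | h'
    · exact absurd (sub_eq_zero.mp h') hne_ac
    · exact h'
  have hpair : a*b + b*c + c*a = -(ℓ:ℝ) := by linear_combination (a+b)*hsum - hab2
  have hprod : a*b*c = -ε := by linear_combination ha0 - a*hab2 + a*b*hsum
  -- root characterization over ℂ
  have hiff : ∀ w : ℂ, Polynomial.aeval w f = 0 ↔ w^3 - ((ℓ:ℝ):ℂ)*w + ((ε:ℝ):ℂ) = 0 := by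
    intro w
    rw [hf]
    simp only [map_add, map_sub, map_mul, map_pow, Polynomial.aeval_X, Polynomial.aeval_C,
      Complex.coe_algebraMap]
  have hroots : ∀ w : ℂ, Polynomial.aeval w f = 0 → (w = (a:ℂ) ∨ w = (b:ℂ) ∨ w = (c:ℂ)) := by
    intro w hw
    rw [hiff] at hw
    have h1 : (a:ℂ) + b + c = 0 := by exact_mod_cast hsum
    have h2 : (a:ℂ)*b + b*c + c*a = -((ℓ:ℝ):ℂ) := by exact_mod_cast hpair
    have h3 : (a:ℂ)*b*c = -((ε:ℝ):ℂ) := by exact_mod_cast hprod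
    have hfac : (w - a) * (w - b) * (w - c) = 0 := by
      linear_combination hw - w^2*h1 + w*h2 - h3
    rcases mul_eq_zero.mp hfac with h | h
    · rcases mul_eq_zero.mp h with h' | h'
      · exact Or.inl (sub_eq_zero.mp h')
      · exact Or.inr (Or.inl (sub_eq_zero.mp h'))
    · exact Or.inr (Or.inr (sub_eq_zero.mp h))
  -- witnesses are roots
  have hrootA : Polynomial.aeval ((a:ℝ):ℂ) f = 0 := by
    rw [hiff]; exact_mod_cast congrArg (Complex.ofReal) ha0
  have hrootB : Polynomial.aeval ((b:ℝ):ℂ) f = 0 := by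
    rw [hiff]; exact_mod_cast congrArg (Complex.ofReal) hb0
  have hrootC : Polynomial.aeval ((c:ℝ):ℂ) f = 0 := by
    rw [hiff]; exact_mod_cast congrArg (Complex.ofReal) hc0
  -- complex distances for real points
  have habs : ∀ x y : ℝ, ‖(x:ℂ) - (y:ℂ)‖ = |x - y| := by
    intro x y; rw [← Complex.ofReal_sub, Complex.norm_real, Real.norm_eq_abs]
  refine ⟨?_, ?_, ?_⟩
  · -- part 1
    intro w hw
    rcases hroots w hw with rfl | rfl | rfl
    · refine lt_of_le_of_lt (min_le_right _ _) ?_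
      rw [show ((a:ℂ) + (s:ℝ)) = ((a + s : ℝ) : ℂ) by push_cast; ring, Complex.norm_real, Real.norm_eq_abs]
      rw [abs_lt]; constructor <;> linarith
    · refine lt_of_le_of_lt (le_trans (min_le_left _ _) (min_le_left _ _)) ?_
      rw [Complex.norm_real, Real.norm_eq_abs, abs_lt]; constructor <;> linarith
    · refine lt_of_le_of_lt (le_trans (min_le_left _ _) (min_le_right _ _)) ?_
      rw [show ((c:ℂ) - (s:ℝ)) = ((c - s : ℝ) : ℂ) by push_cast; ring, Complex.norm_real, Real.norm_eq_abs]
      rw [abs_lt]; constructor <;> linarith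
  · -- part 2
    intro c₀ hc₀
    simp only [Set.mem_insert_iff, Set.mem_singleton_iff] at hc₀
    rcases hc₀ with rfl | rfl | rfl
    · refine ⟨(b:ℂ), ⟨hrootB, ?_⟩, ?_⟩
      · rw [sub_zero, Complex.norm_real, Real.norm_eq_abs, abs_lt]; constructor <;> linarith
      · rintro y ⟨hy, hyd⟩
        rcases hroots y hy with rfl | rfl | rfl
        · rw [sub_zero, Complex.norm_real, Real.norm_eq_abs, abs_lt] at hyd; exfalso; linarith [hyd.1]
        · rfl
        · rw [sub_zero, Complex.norm_real, Real.norm_eq_abs, abs_lt] at hyd; exfalso; linarith [hyd.2]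
    · refine ⟨(c:ℂ), ⟨hrootC, ?_⟩, ?_⟩
      · rw [show ((c:ℂ) - (s:ℝ)) = ((c - s : ℝ) : ℂ) by push_cast; ring, Complex.norm_real, Real.norm_eq_abs,
          abs_lt]; constructor <;> linarith
      · rintro y ⟨hy, hyd⟩
        rcases hroots y hy with rfl | rfl | rfl
        · rw [show ((a:ℂ) - (s:ℝ)) = ((a - s : ℝ) : ℂ) by push_cast; ring, Complex.norm_real, Real.norm_eq_abs,
            abs_lt] at hyd; exfalso; linarith [hyd.1]
        · rw [show ((b:ℂ) - (s:ℝ)) = ((b - s : ℝ) : ℂ) by push_cast; ring, Complex.norm_real, Real.norm_eq_abs,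
            abs_lt] at hyd; exfalso; linarith [hyd.1]
        · rfl
    · refine ⟨(a:ℂ), ⟨hrootA, ?_⟩, ?_⟩
      · rw [show ((a:ℂ) - -((s:ℝ):ℂ)) = ((a + s : ℝ) : ℂ) by push_cast; ring, Complex.norm_real, Real.norm_eq_abs,
          abs_lt]; constructor <;> linarith
      · rintro y ⟨hy, hyd⟩
        rcases hroots y hy with rfl | rfl | rfl
        · rfl
        · rw [show ((b:ℂ) - -((s:ℝ):ℂ)) = ((b + s : ℝ) : ℂ) by push_cast; ring, Complex.norm_real, Real.norm_eq_abs,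
            abs_lt] at hyd; exfalso; linarith [hyd.2]
        · rw [show ((c:ℂ) - -((s:ℝ):ℂ)) = ((c + s : ℝ) : ℂ) by push_cast; ring, Complex.norm_real, Real.norm_eq_abs,
            abs_lt] at hyd; exfalso; linarith [hyd.2]
  · -- part 3
    intro w hw
    rcases hroots w hw with rfl | rfl | rfl <;> exact Complex.ofReal_im _
end

section
/- Let Γ be the subgroup of ℂ* generated by a finite set R of complex numbers of absolute value √q (q > 0 real, q ∈ Γ), and let Γ' be the subgroup generated by {q⁻¹α² : α ∈ R}. Then Γ' together with q generates a finite-index subgroup of Γ, and rank(Γ) = rank(Γ') + 1. -/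
open scoped TensorProduct

/-- The (free) rank of a commutative group: the dimension of `ℚ ⊗ℤ G`. -/
noncomputable def grpRank (G : Type*) [CommGroup G] : ℕ :=
  Module.finrank ℚ (ℚ ⊗[ℤ] (Additive G))

/-- Upgrade a `ℤ`-linear map between `ℚ`-modules to a `ℚ`-linear map. -/
def homUpgrade {M N : Type*} [AddCommGroup M] [AddCommGroup N] [Module ℚ M] [Module ℚ N]
    (f : M →ₗ[ℤ] N) : M →ₗ[ℚ] N where
  toFun := f
  map_add' := f.map_add
  map_smul' c x := map_rat_smul f c x

/-- Upgrade a `ℤ`-linear equiv between `ℚ`-modules to a `ℚ`-linear equiv. -/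
def equivUpgrade {M N : Type*} [AddCommGroup M] [AddCommGroup N] [Module ℚ M] [Module ℚ N]
    (e : M ≃ₗ[ℤ] N) : M ≃ₗ[ℚ] N :=
  LinearEquiv.ofLinear (homUpgrade e.toLinearMap) (homUpgrade e.symm.toLinearMap)
    (by ext x; simp [homUpgrade]) (by ext x; simp [homUpgrade])

lemma grpRank_congr {G H : Type*} [CommGroup G] [CommGroup H] (e : G ≃* H) :
    grpRank G = grpRank H := by
  have e' : Additive G ≃ₗ[ℤ] Additive H := (MulEquiv.toAdditive e).toIntLinearEquiv
  exact (equivUpgrade (TensorProduct.congr (LinearEquiv.refl ℤ ℚ) e')).finrank_eq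

/-- `Additive` commutes with products. -/
def prodAdd (G H : Type*) [CommGroup G] [CommGroup H] :
    Additive (G × H) ≃+ (Additive G × Additive H) where
  toFun x := (Additive.ofMul x.toMul.1, Additive.ofMul x.toMul.2)
  invFun p := Additive.ofMul (p.1.toMul, p.2.toMul)
  left_inv _ := rfl
  right_inv _ := rfl
  map_add' _ _ := rfl

lemma grpRank_prod (G H : Type*) [CommGroup G] [CommGroup H]
    [Module.Finite ℤ (Additive G)] [Module.Finite ℤ (Additive H)] :
    grpRank (G × H) = grpRank G + grpRank H := by
  have E : ℚ ⊗[ℤ] Additive (G × H) ≃ₗ[ℚ] (ℚ ⊗[ℤ] Additive G) × (ℚ ⊗[ℤ] Additive H) :=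
    equivUpgrade ((TensorProduct.congr (LinearEquiv.refl ℤ ℚ)
      (prodAdd G H).toIntLinearEquiv).trans
      (TensorProduct.prodRight ℤ ℤ ℚ (Additive G) (Additive H)))
  rw [grpRank, grpRank, grpRank, E.finrank_eq, Module.finrank_prod]

lemma grpRank_multiplicative_int : grpRank (Multiplicative ℤ) = 1 := by
  have e0 : Additive (Multiplicative ℤ) ≃+ ℤ :=
    { toFun := fun x => x.toMul.toAdd
      invFun := fun n => Additive.ofMul (Multiplicative.ofAdd n)
      left_inv := fun _ => rfl
      right_inv := fun _ => rfl
      map_add' := fun _ _ => rfl }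
  have E : ℚ ⊗[ℤ] Additive (Multiplicative ℤ) ≃ₗ[ℚ] ℚ :=
    equivUpgrade ((TensorProduct.congr (LinearEquiv.refl ℤ ℚ) e0.toIntLinearEquiv).trans
      (TensorProduct.rid ℤ ℚ))
  rw [grpRank, E.finrank_eq, Module.finrank_self]

lemma moduleFinite_of_addEquiv {M : Type*} [AddCommGroup M] (e : ℤ ≃+ M) :
    Module.Finite ℤ M :=
  Module.Finite.equiv e.toIntLinearEquiv

/-- Groups admitting mutual homs whose composites are squaring have equal rank. -/
lemma grpRank_eq_of_sq {A B : Type*} [CommGroup A] [CommGroup B]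
    (f : A →* B) (g : B →* A) (hgf : ∀ a, g (f a) = a ^ 2) (hfg : ∀ b, f (g b) = b ^ 2) :
    grpRank A = grpRank B := by
  set F := LinearMap.baseChange ℚ (MonoidHom.toAdditive f).toIntLinearMap with hF
  set G := LinearMap.baseChange ℚ (MonoidHom.toAdditive g).toIntLinearMap with hG
  have hFG : ∀ y : ℚ ⊗[ℤ] Additive B, F (G y) = (2 : ℚ) • y := by
    intro y
    induction y using TensorProduct.induction_on with
    | zero => simp
    | tmul a x =>
        have h1 : (MonoidHom.toAdditive f).toIntLinearMap
            ((MonoidHom.toAdditive g).toIntLinearMap x) = x + x := by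
          show Additive.ofMul (f (g x.toMul)) = x + x
          rw [hfg, pow_two]
          rfl
        rw [hF, hG, LinearMap.baseChange_tmul, LinearMap.baseChange_tmul, h1,
          TensorProduct.tmul_add, two_smul]
    | add u v hu hv => rw [map_add, map_add, hu, hv, smul_add]
  have hGF : ∀ x : ℚ ⊗[ℤ] Additive A, G (F x) = (2 : ℚ) • x := by
    intro x
    induction x using TensorProduct.induction_on with
    | zero => simp
    | tmul a x =>
        have h1 : (MonoidHom.toAdditive g).toIntLinearMap
            ((MonoidHom.toAdditive f).toIntLinearMap x) = x + x := by
          show Additive.ofMul (g (f x.toMul)) = x + x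
          rw [hgf, pow_two]
          rfl
        rw [hF, hG, LinearMap.baseChange_tmul, LinearMap.baseChange_tmul, h1,
          TensorProduct.tmul_add, two_smul]
    | add u v hu hv => rw [map_add, map_add, hu, hv, smul_add]
  have E : (ℚ ⊗[ℤ] Additive A) ≃ₗ[ℚ] (ℚ ⊗[ℤ] Additive B) :=
    LinearEquiv.ofLinear F ((2 : ℚ)⁻¹ • G)
      (LinearMap.ext fun y => by
        simp only [LinearMap.comp_apply, LinearMap.smul_apply, map_smul, hFG y,
          LinearMap.id_apply, smul_smul]
        norm_num)
      (LinearMap.ext fun x => by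
        simp only [LinearMap.comp_apply, LinearMap.smul_apply, hGF x,
          LinearMap.id_apply, smul_smul]
        norm_num)
  exact E.finrank_eq

lemma fg_closure_of_finite {G : Type*} [Group G] {T : Set G} (hT : T.Finite) :
    Group.FG ↥(Subgroup.closure T) :=
  Group.fg_iff.mpr ⟨Subtype.val ⁻¹' T, Subgroup.closure_closure_coe_preimage,
    hT.preimage Subtype.val_injective.injOn⟩

lemma moduleFinite_closure_of_finite {G : Type*} [CommGroup G] {T : Set G} (hT : T.Finite) :
    Module.Finite ℤ (Additive ↥(Subgroup.closure T)) := by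
  have := fg_closure_of_finite hT
  exact Module.Finite.iff_addGroup_fg.mpr (GroupFG.iff_add_fg.mp this)

theorem stmt10 (q : ℝ) (hq : 1 < q) (qu : ℂˣ) (hqu : (qu : ℂ) = (q : ℂ))
    (R : Finset ℂˣ) (habs : ∀ α ∈ R, ‖(α : ℂ)‖ = Real.sqrt q)
    (hqΓ : qu ∈ Subgroup.closure (R : Set ℂˣ)) :
    (Subgroup.closure ((fun α : ℂˣ => qu⁻¹ * α ^ 2) '' (R : Set ℂˣ))
        ⊔ Subgroup.closure {qu}).relIndex (Subgroup.closure (R : Set ℂˣ)) ≠ 0 ∧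
    grpRank (Subgroup.closure (R : Set ℂˣ)) =
      grpRank (Subgroup.closure ((fun α : ℂˣ => qu⁻¹ * α ^ 2) '' (R : Set ℂˣ))) + 1 := by
  have hq0 : (0 : ℝ) < q := lt_trans one_pos hq
  set S : Set ℂˣ := (fun α : ℂˣ => qu⁻¹ * α ^ 2) '' (R : Set ℂˣ) with hS
  set Γ : Subgroup ℂˣ := Subgroup.closure (R : Set ℂˣ) with hΓ
  set Γ' : Subgroup ℂˣ := Subgroup.closure S with hΓ'
  set K : Subgroup ℂˣ := Subgroup.closure ({qu} : Set ℂˣ) with hK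
  set H : Subgroup ℂˣ := Γ' ⊔ K with hH
  have hΓ'le : Γ' ≤ Γ := by
    rw [hΓ', Subgroup.closure_le]
    rintro _ ⟨α, hα, rfl⟩
    exact mul_mem (inv_mem hqΓ) (pow_mem (Subgroup.subset_closure hα) 2)
  have hKle : K ≤ Γ := by
    rw [hK, Subgroup.closure_le]
    intro x hx
    rw [Set.mem_singleton_iff] at hx
    subst hx
    exact hqΓ
  have hHle : H ≤ Γ := sup_le hΓ'le hKle
  have hquK : qu ∈ K := Subgroup.subset_closure rfl
  have hquH : qu ∈ H := le_sup_right (a := Γ') hquK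
  have hΓ'H : Γ' ≤ H := le_sup_left
  have hsq : ∀ g ∈ Γ, g ^ 2 ∈ H := by
    intro g hg
    induction hg using Subgroup.closure_induction with
    | mem α hα =>
        have h1 : qu⁻¹ * α ^ 2 ∈ H := hΓ'H (Subgroup.subset_closure ⟨α, hα, rfl⟩)
        have h2 : α ^ 2 = qu * (qu⁻¹ * α ^ 2) := by group
        rw [h2]
        exact mul_mem hquH h1
    | one => simpa using one_mem H
    | mul x y hx hy px py => rw [mul_pow]; exact mul_mem px py
    | inv x hx px => rw [inv_pow]; exact inv_mem px
  constructor
  · -- finite relative index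
    show (H.subgroupOf Γ).index ≠ 0
    haveI : Group.FG ↥Γ := fg_closure_of_finite R.finite_toSet
    haveI : Group.FG (↥Γ ⧸ H.subgroupOf Γ) :=
      Group.fg_of_surjective (f := QuotientGroup.mk' (H.subgroupOf Γ))
        (QuotientGroup.mk'_surjective _)
    have htor : IsMulTorsion (↥Γ ⧸ H.subgroupOf Γ) := by
      intro x
      induction x using QuotientGroup.induction_on with
      | H g =>
          refine isOfFinOrder_iff_pow_eq_one.mpr ⟨2, two_pos, ?_⟩
          rw [← QuotientGroup.mk_pow, QuotientGroup.eq_one_iff]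
          rw [Subgroup.mem_subgroupOf]
          simpa using hsq (g : ℂˣ) g.2
    haveI : Finite (↥Γ ⧸ H.subgroupOf Γ) := CommGroup.finite_of_fg_torsion _ htor
    exact Subgroup.index_ne_zero_of_finite
  · -- rank statement
    -- Step 1: grpRank Γ = grpRank H
    let f : ↥Γ →* ↥H :=
      { toFun := fun x => ⟨(x : ℂˣ) ^ 2, hsq _ x.2⟩
        map_one' := by ext; simp
        map_mul' := fun a b => by ext; simp [mul_pow] }
    have hgf : ∀ a : ↥Γ, Subgroup.inclusion hHle (f a) = a ^ 2 := by
      intro a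
      ext
      simp [f]
    have hfg : ∀ b : ↥H, f (Subgroup.inclusion hHle b) = b ^ 2 := by
      intro b
      ext
      simp [f]
    have hrk1 : grpRank ↥Γ = grpRank ↥H :=
      grpRank_eq_of_sq f (Subgroup.inclusion hHle) hgf hfg
    -- Step 2: abs of elements of Γ' is 1
    have habsq : ‖((qu : ℂˣ) : ℂ)‖ = q := by
      rw [hqu, Complex.norm_real, Real.norm_eq_abs, abs_of_pos hq0]
    have habs1 : ∀ x : ℂˣ, x ∈ Γ' → ‖((x : ℂˣ) : ℂ)‖ = 1 := by
      intro x hx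
      induction hx using Subgroup.closure_induction with
      | mem y hy =>
          obtain ⟨α, hα, rfl⟩ := hy
          have hc : (((qu⁻¹ * α ^ 2 : ℂˣ) : ℂˣ) : ℂ) = ((qu : ℂˣ) : ℂ)⁻¹ * ((α : ℂˣ) : ℂ) ^ 2 := by
            push_cast
            ring
          rw [hc, norm_mul, norm_inv, norm_pow, habsq, habs α hα, Real.sq_sqrt hq0.le,
            inv_mul_cancel₀ (ne_of_gt hq0)]
      | one => simp
      | mul a b ha hb pa pb => rw [Units.val_mul, norm_mul, pa, pb, mul_one]
      | inv a ha pa =>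
          rw [show ((a⁻¹ : ℂˣ) : ℂ) = ((a : ℂˣ) : ℂ)⁻¹ from by push_cast; ring, norm_inv, pa,
            inv_one]
    -- Step 3: the isomorphism Γ' × ℤ ≃* H
    let φ : ↥Γ' × Multiplicative ℤ →* ℂˣ :=
      (Γ'.subtype.comp (MonoidHom.fst _ _)) * ((zpowersHom ℂˣ qu).comp (MonoidHom.snd _ _))
    have hφ : ∀ g : ↥Γ', ∀ n : Multiplicative ℤ, φ (g, n) = (g : ℂˣ) * qu ^ n.toAdd := by
      intro g n
      rfl
    have hinj : Function.Injective φ := by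
      rw [injective_iff_map_eq_one]
      rintro ⟨g, n⟩ h
      rw [hφ] at h
      have habs' : q ^ n.toAdd = 1 := by
        have h2 := congrArg (fun u : ℂˣ => ‖((u : ℂˣ) : ℂ)‖) h
        simp only [Units.val_mul, norm_mul, Units.val_one, norm_one] at h2
        rw [habs1 g g.2, one_mul] at h2
        rw [show (((qu ^ n.toAdd : ℂˣ) : ℂˣ) : ℂ) = ((qu : ℂˣ) : ℂ) ^ n.toAdd from by
          push_cast; ring] at h2
        rwa [norm_zpow, habsq] at h2
      have hn : n.toAdd = 0 :=
        zpow_right_injective₀ hq0 (ne_of_gt hq) (by simpa using habs')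
      have hn1 : n = 1 := by
        have := congrArg Multiplicative.ofAdd hn
        simpa using this
      have hg : (g : ℂˣ) = 1 := by
        rw [hn, zpow_zero, mul_one] at h
        exact h
      rw [hn1]
      exact Prod.ext (Subtype.ext hg) rfl
    have hrange : φ.range = H := by
      apply le_antisymm
      · rintro _ ⟨⟨g, n⟩, rfl⟩
        rw [hφ]
        exact mul_mem (hΓ'H g.2) (zpow_mem hquH _)
      · rw [hH]
        refine sup_le ?_ ?_
        · intro g hg
          refine ⟨(⟨g, hg⟩, 1), ?_⟩
          rw [hφ]
          simp
        · rw [hK, Subgroup.closure_le]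
          intro x hx
          rw [Set.mem_singleton_iff] at hx
          subst hx
          refine ⟨(1, Multiplicative.ofAdd 1), ?_⟩
          rw [hφ]
          simp
    let e : (↥Γ' × Multiplicative ℤ) ≃* ↥H :=
      (MonoidHom.ofInjective hinj).trans (MulEquiv.subgroupCongr hrange)
    haveI : Module.Finite ℤ (Additive ↥Γ') :=
      moduleFinite_closure_of_finite (R.finite_toSet.image _)
    haveI : Module.Finite ℤ (Additive (Multiplicative ℤ)) :=
      moduleFinite_of_addEquiv
        { toFun := fun n => Additive.ofMul (Multiplicative.ofAdd n)
          invFun := fun x => x.toMul.toAdd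
          left_inv := fun _ => rfl
          right_inv := fun _ => rfl
          map_add' := fun _ _ => rfl }
    calc grpRank ↥Γ = grpRank ↥H := hrk1
      _ = grpRank (↥Γ' × Multiplicative ℤ) := (grpRank_congr e).symm
      _ = grpRank ↥Γ' + grpRank (Multiplicative ℤ) := grpRank_prod _ _
      _ = grpRank ↥Γ' + 1 := by rw [grpRank_multiplicative_int]
end
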